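/- Under the MMSB setup, for every node i (1 ≤ i ≤ n), √((τ+δ_min)/(τ+δ_max)) · 1/√(K λ_1(Π'Π)) ≤ ‖V(i,:)‖ ≤ √((τ+δ_max)/(τ+δ_min)) · 1/√(λ_K(Π'Π)). -/

import Mathlib

open Matrix BigOperators

/-- Cauchy–Schwarz for a PSD symmetric bilinear form given by a matrix. -/
lemma cs_psd {K : ℕ} (G : Matrix (Fin K) (Fin K) ℝ) (hsym : Gᵀ = G)
    (hpsd : ∀ w : Fin K → ℝ, 0 ≤ w ⬝ᵥ (G *ᵥ w)) (x y : Fin K → ℝ) :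
    (x ⬝ᵥ (G *ᵥ y))^2 ≤ (x ⬝ᵥ (G *ᵥ x)) * (y ⬝ᵥ (G *ᵥ y)) := by
  have hyx : y ⬝ᵥ (G *ᵥ x) = x ⬝ᵥ (G *ᵥ y) := by
    rw [Matrix.dotProduct_mulVec]
    conv_lhs => rw [← hsym]
    rw [Matrix.vecMul_transpose, dotProduct_comm]
  have key : ∀ t : ℝ, 0 ≤ (y ⬝ᵥ (G *ᵥ y)) * (t * t) + (2 * (x ⬝ᵥ (G *ᵥ y))) * t
      + (x ⬝ᵥ (G *ᵥ x)) := by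
    intro t
    have h := hpsd (x + t • y)
    simp only [Matrix.mulVec_add, Matrix.mulVec_smul, dotProduct_add,
      add_dotProduct, dotProduct_smul, smul_dotProduct,
      smul_eq_mul] at h
    rw [hyx] at h
    ring_nf at h ⊢
    linarith [h]
  have := discrim_le_zero key
  rw [discrim] at this
  nlinarith [this]

/-- Rayleigh quotient bounds via the spectral theorem. -/
lemma rayleigh_bounds {K : ℕ} (hK : 0 < K) (M : Matrix (Fin K) (Fin K) ℝ)
    (hM : M.IsHermitian) (x : Fin K → ℝ) :
    (⨅ k, hM.eigenvalues k) * (x ⬝ᵥ x) ≤ x ⬝ᵥ (M *ᵥ x) ∧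
      x ⬝ᵥ (M *ᵥ x) ≤ (⨆ k, hM.eigenvalues k) * (x ⬝ᵥ x) := by
  classical
  set U : Matrix (Fin K) (Fin K) ℝ := (Matrix.IsHermitian.eigenvectorUnitary hM : Matrix (Fin K) (Fin K) ℝ) with hU
  have hstar : star U = Uᵀ := Matrix.conjTranspose_eq_transpose_of_trivial U
  have hUU : U * Uᵀ = 1 := by
    rw [← hstar]; exact (Matrix.mem_unitaryGroup_iff.mp (Matrix.IsHermitian.eigenvectorUnitary hM).2)
  set μ : Fin K → ℝ := hM.eigenvalues with hμ
  have hspec : M = U * Matrix.diagonal μ * Uᵀ := by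
    rw [← hstar]
    have := hM.spectral_theorem
    simpa using this
  set u : Fin K → ℝ := Uᵀ *ᵥ x with hu
  have hform : x ⬝ᵥ (M *ᵥ x) = ∑ k, μ k * (u k)^2 := by
    rw [hspec]
    rw [← Matrix.mulVec_mulVec, ← Matrix.mulVec_mulVec]
    rw [Matrix.dotProduct_mulVec x U, ← Matrix.mulVec_transpose, ← hu]
    simp [dotProduct, Matrix.mulVec_diagonal, mul_comm, sq, mul_assoc, mul_left_comm]
  have hnorm : u ⬝ᵥ u = x ⬝ᵥ x := by
    calc u ⬝ᵥ u = (x ᵥ* U) ⬝ᵥ (Uᵀ *ᵥ x) := by rw [hu, Matrix.mulVec_transpose]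
      _ = x ⬝ᵥ (U *ᵥ (Uᵀ *ᵥ x)) := (Matrix.dotProduct_mulVec x U _).symm
      _ = x ⬝ᵥ ((U * Uᵀ) *ᵥ x) := by rw [Matrix.mulVec_mulVec]
      _ = x ⬝ᵥ x := by rw [hUU, Matrix.one_mulVec]
  have hne : Nonempty (Fin K) := ⟨⟨0, hK⟩⟩
  have hbddA : BddAbove (Set.range μ) := Set.Finite.bddAbove (Set.finite_range μ)
  have hbddB : BddBelow (Set.range μ) := Set.Finite.bddBelow (Set.finite_range μ)
  constructor
  · rw [hform, ← hnorm]
    have : ∀ k, (⨅ j, μ j) * (u k)^2 ≤ μ k * (u k)^2 := fun k =>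
      mul_le_mul_of_nonneg_right (ciInf_le hbddB k) (sq_nonneg _)
    calc (⨅ j, μ j) * (u ⬝ᵥ u) = ∑ k, (⨅ j, μ j) * (u k)^2 := by
          simp [dotProduct, Finset.mul_sum, sq]
      _ ≤ ∑ k, μ k * (u k)^2 := Finset.sum_le_sum fun k _ => this k
  · rw [hform, ← hnorm]
    have : ∀ k, μ k * (u k)^2 ≤ (⨆ j, μ j) * (u k)^2 := fun k =>
      mul_le_mul_of_nonneg_right (le_ciSup hbddA k) (sq_nonneg _)
    calc ∑ k, μ k * (u k)^2 ≤ ∑ k, (⨆ j, μ j) * (u k)^2 := Finset.sum_le_sum fun k _ => this k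
      _ = (⨆ j, μ j) * (u ⬝ᵥ u) := by simp [dotProduct, Finset.mul_sum, sq]

lemma dotProduct_self_nonneg' {K : ℕ} (x : Fin K → ℝ) : 0 ≤ x ⬝ᵥ x :=
  Finset.sum_nonneg fun k _ => mul_self_nonneg (x k)

lemma cs_standard {K : ℕ} (x z : Fin K → ℝ) : (x ⬝ᵥ z)^2 ≤ (x ⬝ᵥ x) * (z ⬝ᵥ z) := by
  have h := Finset.sum_mul_sq_le_sq_mul_sq Finset.univ x z
  simp only [dotProduct, ← pow_two]
  exact h

lemma inv_form_bounds {K : ℕ} (G W : Matrix (Fin K) (Fin K) ℝ) (hGsym : Gᵀ = G)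
    (hGW : G * W = 1) (a b : ℝ) (ha : 0 < a) (hb : 0 < b)
    (hlow : ∀ x : Fin K → ℝ, a * (x ⬝ᵥ x) ≤ x ⬝ᵥ (G *ᵥ x))
    (hup : ∀ x : Fin K → ℝ, x ⬝ᵥ (G *ᵥ x) ≤ b * (x ⬝ᵥ x))
    (x : Fin K → ℝ) :
    (x ⬝ᵥ x) / b ≤ x ⬝ᵥ (W *ᵥ x) ∧ x ⬝ᵥ (W *ᵥ x) ≤ (x ⬝ᵥ x) / a := by
  have hGpsd : ∀ w : Fin K → ℝ, 0 ≤ w ⬝ᵥ (G *ᵥ w) := fun w =>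
    le_trans (mul_nonneg ha.le (dotProduct_self_nonneg' w)) (hlow w)
  set z : Fin K → ℝ := W *ᵥ x with hz
  have hGz : G *ᵥ z = x := by rw [hz, Matrix.mulVec_mulVec, hGW, Matrix.one_mulVec]
  have hq : x ⬝ᵥ (W *ᵥ x) = x ⬝ᵥ z := rfl
  have hzGz : z ⬝ᵥ (G *ᵥ z) = x ⬝ᵥ z := by rw [hGz, dotProduct_comm]
  have hxGz : x ⬝ᵥ (G *ᵥ z) = x ⬝ᵥ x := by rw [hGz]
  have hxx : 0 ≤ x ⬝ᵥ x := dotProduct_self_nonneg' x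
  have hzz : 0 ≤ z ⬝ᵥ z := dotProduct_self_nonneg' z
  have h1 : a * (z ⬝ᵥ z) ≤ x ⬝ᵥ z := by rw [← hzGz]; exact hlow z
  have hxz0 : 0 ≤ x ⬝ᵥ z := le_trans (mul_nonneg ha.le hzz) h1
  constructor
  · -- lower bound
    rw [hq, div_le_iff₀ hb]
    have hcs := cs_psd G hGsym hGpsd x z
    rw [hxGz, hzGz] at hcs
    have h2 : x ⬝ᵥ (G *ᵥ x) ≤ b * (x ⬝ᵥ x) := hup x
    have h3 : 0 ≤ x ⬝ᵥ (G *ᵥ x) := hGpsd x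
    nlinarith [hcs, h2, h3, hxz0, hxx, sq_nonneg ((x ⬝ᵥ x) - b * (x ⬝ᵥ z)),
      mul_nonneg hb.le hxz0, mul_nonneg (mul_nonneg hb.le hxz0) hxz0]
  · rw [hq, le_div_iff₀ ha]
    have hcs := cs_standard x z
    rcases eq_or_lt_of_le hzz with hz0 | hz0
    · have h0 : (x ⬝ᵥ z)^2 ≤ 0 := by rw [← hz0, mul_zero] at hcs; exact hcs
      have hxz : x ⬝ᵥ z = 0 := by nlinarith [sq_nonneg (x ⬝ᵥ z)]
      rw [hxz, zero_mul]; exact hxx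
    · have h2 : (a * (z ⬝ᵥ z)) * (x ⬝ᵥ z) ≤ (x ⬝ᵥ z) * (x ⬝ᵥ z) :=
        mul_le_mul_of_nonneg_right h1 hxz0
      exact le_of_mul_le_mul_right (by nlinarith [hcs, h2]) hz0

/-- Euclidean norm of the `i`-th row of a matrix. -/
noncomputable def rowNorm {m k : ℕ} (M : Matrix (Fin m) (Fin k) ℝ) (i : Fin m) : ℝ :=
  Real.sqrt (∑ j, (M i j) ^ 2)

/-- Lemma B.2: for every node `i`,
`√((τ+δ_min)/(τ+δ_max)) / √(K λ₁(Π'Π)) ≤ ‖V(i,:)‖ ≤ √((τ+δ_max)/(τ+δ_min)) / √(λ_K(Π'Π))`. -/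
theorem stmt_9
    {n K : ℕ} (hn : 0 < n) (hK : 0 < K) (hKn : K ≤ n)
    (Pi : Matrix (Fin n) (Fin K) ℝ)
    (hPi_nonneg : ∀ i k, 0 ≤ Pi i k)
    (hPi_rowsum : ∀ i, ∑ k, Pi i k = 1)
    (hPi_rank : Pi.rank = K)
    (hpure : ∀ k : Fin K, ∃ i : Fin n, ∀ l, Pi i l = if l = k then 1 else 0)
    (Pt : Matrix (Fin K) (Fin K) ℝ)
    (hPt_symm : Pt.IsSymm)
    (hPt_nonneg : ∀ k l, 0 ≤ Pt k l)
    (hPt_rank : Pt.rank = K)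
    (hPt_le_one : ∀ k l, Pt k l ≤ 1)
    (hPt_max : ∃ k l, Pt k l = 1)
    (ρ τ : ℝ) (hρ0 : 0 < ρ) (hρ1 : ρ ≤ 1) (hτ : 0 ≤ τ)
    (Om : Matrix (Fin n) (Fin n) ℝ) (hOm : Om = Pi * (ρ • Pt) * Piᵀ)
    (deg : Fin n → ℝ) (hdeg : ∀ i, deg i = ∑ j, Om i j)
    (hpos : ∀ i, 0 < deg i + τ)
    (Ltau : Matrix (Fin n) (Fin n) ℝ)
    (hLtau : Ltau = Matrix.diagonal (fun i => (Real.sqrt (deg i + τ))⁻¹) * Om *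
      Matrix.diagonal (fun i => (Real.sqrt (deg i + τ))⁻¹))
    (Idx : Fin K → Fin n) (hIdx : Pi.submatrix Idx id = 1)
    (V : Matrix (Fin n) (Fin K) ℝ) (e : Fin K → ℝ)
    (hVorth : Vᵀ * V = 1) (he : ∀ k, e k ≠ 0)
    (hVE : Ltau = V * Matrix.diagonal e * Vᵀ)
    (hH : (Piᵀ * Pi).IsHermitian) :
    ∀ i : Fin n,
      Real.sqrt ((τ + ⨅ j, deg j) / (τ + ⨆ j, deg j)) *
          (Real.sqrt ((K : ℝ) * ⨆ k, hH.eigenvalues k))⁻¹ ≤ rowNorm V i ∧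
      rowNorm V i ≤ Real.sqrt ((τ + ⨆ j, deg j) / (τ + ⨅ j, deg j)) *
          (Real.sqrt (⨅ k, hH.eigenvalues k))⁻¹ := by
  classical
  intro i
  haveI : Nonempty (Fin n) := ⟨⟨0, hn⟩⟩
  haveI : Nonempty (Fin K) := ⟨⟨0, hK⟩⟩
  set d : Fin n → ℝ := fun j => deg j + τ with hd_def
  have hd : ∀ j, 0 < d j := hpos
  set s : Fin n → ℝ := fun j => (Real.sqrt (d j))⁻¹ with hs_def
  have hs : ∀ j, 0 < s j := fun j => inv_pos.mpr (Real.sqrt_pos.mpr (hd j))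
  have hs2 : ∀ j, (s j)^2 = (d j)⁻¹ := fun j => by
    rw [hs_def]; rw [inv_pow, Real.sq_sqrt (hd j).le]
  -- min/max degrees
  obtain ⟨jm, hjm⟩ := Finite.exists_min deg
  obtain ⟨jM, hjM⟩ := Finite.exists_max deg
  have hbddB := Set.Finite.bddBelow (Set.finite_range deg)
  have hbddA := Set.Finite.bddAbove (Set.finite_range deg)
  have hinf : ⨅ j, deg j = deg jm := le_antisymm (ciInf_le hbddB jm) (le_ciInf hjm)
  have hsup : ⨆ j, deg j = deg jM := le_antisymm (ciSup_le hjM) (le_ciSup hbddA jM)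
  have hδm_pos : 0 < τ + ⨅ j, deg j := by rw [hinf]; linarith [hpos jm]
  have hδM_pos : 0 < τ + ⨆ j, deg j := by rw [hsup]; linarith [hpos jM]
  set δm := ⨅ j, deg j with hδm_def
  set δM := ⨆ j, deg j with hδM_def
  have hdlow : ∀ j, τ + δm ≤ d j := fun j => by
    have := ciInf_le hbddB j
    simp only [hd_def]; rw [hδm_def]; linarith [this]
  have hdhigh : ∀ j, d j ≤ τ + δM := fun j => by
    have := le_ciSup hbddA j
    simp only [hd_def]; rw [hδM_def]; linarith [this]
  -- matrix decomposition
  set Y : Matrix (Fin n) (Fin K) ℝ := Matrix.diagonal s * Pi with hY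
  have hLY : Ltau = Y * (ρ • Pt) * Yᵀ := by
    rw [hLtau, hOm, hY, Matrix.transpose_mul, Matrix.diagonal_transpose]
    simp only [Matrix.mul_assoc]
  set Einv := Matrix.diagonal (fun k => (e k)⁻¹) with hEinv_def
  have hEinv : Matrix.diagonal e * Einv = 1 := by
    rw [hEinv_def, Matrix.diagonal_mul_diagonal,
      show (fun k => e k * (e k)⁻¹) = fun _ => (1:ℝ) from funext fun k => mul_inv_cancel₀ (he k),
      Matrix.diagonal_one]
  have hLV : Ltau * V = V * Matrix.diagonal e := by
    rw [hVE, Matrix.mul_assoc (V * Matrix.diagonal e) Vᵀ V, hVorth, Matrix.mul_one]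
  set B := (ρ • Pt) * Yᵀ * V * Einv with hB
  have hVB : V = Y * B := by
    calc V = V * (Matrix.diagonal e * Einv) := by rw [hEinv, Matrix.mul_one]
      _ = (V * Matrix.diagonal e) * Einv := by rw [Matrix.mul_assoc]
      _ = (Ltau * V) * Einv := by rw [hLV]
      _ = Y * B := by rw [hLY, hB]; simp only [Matrix.mul_assoc]
  set G := Yᵀ * Y with hG
  have hGsym : Gᵀ = G := by rw [hG, Matrix.transpose_mul, Matrix.transpose_transpose]
  have hBGB : Bᵀ * G * B = 1 := by
    have h := hVorth
    rw [hVB, Matrix.transpose_mul] at h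
    rw [hG]; simp only [Matrix.mul_assoc] at h ⊢; exact h
  have hright : B * (Bᵀ * G) = 1 := mul_eq_one_comm.mp hBGB
  set W := B * Bᵀ with hW
  have hWG : W * G = 1 := by rw [hW, Matrix.mul_assoc]; exact hright
  have hGW : G * W = 1 := mul_eq_one_comm.mp hWG
  -- M = Πᵀ Π is positive definite
  set M := Piᵀ * Pi with hM
  have hMx : ∀ x : Fin K → ℝ, x ⬝ᵥ (M *ᵥ x) = ∑ j, ((Pi *ᵥ x) j)^2 := by
    intro x
    rw [hM, ← Matrix.mulVec_mulVec, Matrix.dotProduct_mulVec x Piᵀ, Matrix.vecMul_transpose]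
    simp [dotProduct, pow_two]
  have hPiinj : ∀ x : Fin K → ℝ, Pi *ᵥ x = 0 → x = 0 := by
    intro x hx
    funext k
    have h1 : (Pi.submatrix Idx id) *ᵥ x = x := by rw [hIdx, Matrix.one_mulVec]
    have h2 : ((Pi.submatrix Idx id) *ᵥ x) k = 0 := by
      have := congrFun hx (Idx k)
      simpa [Matrix.mulVec, dotProduct, Matrix.submatrix] using this
    rw [h1] at h2
    simpa using h2
  have hMpd : M.PosDef := by
    refine posDef_iff_dotProduct_mulVec.mpr ⟨hH, fun x hx => ?_⟩
    have hstar : star x = x := by simp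
    rw [hstar, hMx]
    have hPx : Pi *ᵥ x ≠ 0 := fun h => hx (hPiinj x h)
    have hnn : ∀ j : Fin n, (0:ℝ) ≤ ((Pi *ᵥ x) j)^2 := fun j => sq_nonneg _
    obtain ⟨j0, hj0⟩ : ∃ j, (Pi *ᵥ x) j ≠ 0 := by
      by_contra hcon
      push_neg at hcon
      exact hPx (funext fun j => hcon j)
    exact Finset.sum_pos' (fun j _ => hnn j) ⟨j0, Finset.mem_univ j0, by positivity⟩
  have hμpos : ∀ k, 0 < hH.eigenvalues k := fun k => hMpd.eigenvalues_pos k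
  -- eigenvalue extrema
  have hbddAe := Set.Finite.bddAbove (Set.finite_range hH.eigenvalues)
  have hbddBe := Set.Finite.bddBelow (Set.finite_range hH.eigenvalues)
  obtain ⟨km, hkm⟩ := Finite.exists_min hH.eigenvalues
  set lm := ⨅ k, hH.eigenvalues k with hlm_def
  set lM := ⨆ k, hH.eigenvalues k with hlM_def
  have hlm_eq : lm = hH.eigenvalues km := le_antisymm (ciInf_le hbddBe km) (le_ciInf hkm)
  have hlm_pos : 0 < lm := hlm_eq ▸ hμpos km
  have hlM_pos : 0 < lM := lt_of_lt_of_le (hμpos km) (le_ciSup hbddAe km)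
  have hKlM_pos : 0 < (K:ℝ) * lM := mul_pos (by exact_mod_cast hK) hlM_pos
  -- quadratic form of G
  have hGform : ∀ x : Fin K → ℝ, x ⬝ᵥ (G *ᵥ x) = ∑ j, (s j)^2 * ((Pi *ᵥ x) j)^2 := by
    intro x
    rw [hG, ← Matrix.mulVec_mulVec, Matrix.dotProduct_mulVec x Yᵀ, Matrix.vecMul_transpose]
    rw [hY, ← Matrix.mulVec_mulVec]
    simp [dotProduct, Matrix.mulVec_diagonal]
    ring_nf
  set a := (τ + δM)⁻¹ * lm with ha_def
  set b := (τ + δm)⁻¹ * lM with hb_def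
  have ha : 0 < a := mul_pos (inv_pos.mpr hδM_pos) hlm_pos
  have hb : 0 < b := mul_pos (inv_pos.mpr hδm_pos) hlM_pos
  have hGlow : ∀ x : Fin K → ℝ, a * (x ⬝ᵥ x) ≤ x ⬝ᵥ (G *ᵥ x) := by
    intro x
    have h1 : (τ + δM)⁻¹ * (x ⬝ᵥ (M *ᵥ x)) ≤ x ⬝ᵥ (G *ᵥ x) := by
      rw [hGform, hMx, Finset.mul_sum]
      apply Finset.sum_le_sum
      intro j _
      have hsj : (τ + δM)⁻¹ ≤ (s j)^2 := by
        rw [hs2]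
        exact inv_anti₀ (hd j) (hdhigh j)
      exact mul_le_mul_of_nonneg_right hsj (sq_nonneg _)
    have h2 := (rayleigh_bounds hK M hH x).1
    calc a * (x ⬝ᵥ x) = (τ + δM)⁻¹ * (lm * (x ⬝ᵥ x)) := by rw [ha_def]; ring
      _ ≤ (τ + δM)⁻¹ * (x ⬝ᵥ (M *ᵥ x)) :=
          mul_le_mul_of_nonneg_left h2 (inv_nonneg.mpr hδM_pos.le)
      _ ≤ x ⬝ᵥ (G *ᵥ x) := h1
  have hGup : ∀ x : Fin K → ℝ, x ⬝ᵥ (G *ᵥ x) ≤ b * (x ⬝ᵥ x) := by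
    intro x
    have h1 : x ⬝ᵥ (G *ᵥ x) ≤ (τ + δm)⁻¹ * (x ⬝ᵥ (M *ᵥ x)) := by
      rw [hGform, hMx, Finset.mul_sum]
      apply Finset.sum_le_sum
      intro j _
      have hsj : (s j)^2 ≤ (τ + δm)⁻¹ := by
        rw [hs2]
        exact inv_anti₀ hδm_pos (hdlow j)
      exact mul_le_mul_of_nonneg_right hsj (sq_nonneg _)
    have h2 := (rayleigh_bounds hK M hH x).2
    calc x ⬝ᵥ (G *ᵥ x) ≤ (τ + δm)⁻¹ * (x ⬝ᵥ (M *ᵥ x)) := h1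
      _ ≤ (τ + δm)⁻¹ * (lM * (x ⬝ᵥ x)) :=
          mul_le_mul_of_nonneg_left h2 (inv_nonneg.mpr hδm_pos.le)
      _ = b * (x ⬝ᵥ x) := by rw [hb_def]; ring
  -- the row vector
  set y : Fin K → ℝ := fun k => s i * Pi i k with hy
  have hYrow : ∀ l, Y i l = y l := by
    intro l
    rw [hY, Matrix.diagonal_mul]
  have hVi : ∀ k, V i k = (y ᵥ* B) k := by
    intro k
    rw [hVB]
    simp only [Matrix.mul_apply, Matrix.vecMul, dotProduct]
    exact Finset.sum_congr rfl fun l _ => by rw [hYrow l]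
  have hrow : ∑ k, (V i k)^2 = y ⬝ᵥ (W *ᵥ y) := by
    calc ∑ k, (V i k)^2 = (y ᵥ* B) ⬝ᵥ (y ᵥ* B) := by
          simp only [dotProduct]
          exact Finset.sum_congr rfl fun k _ => by rw [hVi k, pow_two]
      _ = (y ᵥ* B) ⬝ᵥ (Bᵀ *ᵥ y) := by rw [Matrix.mulVec_transpose]
      _ = y ⬝ᵥ (B *ᵥ (Bᵀ *ᵥ y)) := (Matrix.dotProduct_mulVec y B _).symm
      _ = y ⬝ᵥ (W *ᵥ y) := by rw [Matrix.mulVec_mulVec, ← hW]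
  -- bounds on y ⬝ᵥ y
  have hyy_eq : y ⬝ᵥ y = (s i)^2 * ∑ k, (Pi i k)^2 := by
    simp only [dotProduct, hy, Finset.mul_sum]
    exact Finset.sum_congr rfl fun k _ => by ring
  have hπ_up : ∑ k, (Pi i k)^2 ≤ 1 := by
    have h1 : ∀ k : Fin K, Pi i k ≤ 1 := by
      intro k
      calc Pi i k ≤ ∑ l, Pi i l :=
            Finset.single_le_sum (fun l _ => hPi_nonneg i l) (Finset.mem_univ k)
        _ = 1 := hPi_rowsum i
    calc ∑ k, (Pi i k)^2 ≤ ∑ k, Pi i k := Finset.sum_le_sum fun k _ => by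
          nlinarith [hPi_nonneg i k, h1 k]
      _ = 1 := hPi_rowsum i
  have hπ_low : ((K:ℝ))⁻¹ ≤ ∑ k, (Pi i k)^2 := by
    have h := sq_sum_le_card_mul_sum_sq (s := Finset.univ) (f := fun k => Pi i k)
    rw [hPi_rowsum i] at h
    simp only [Finset.card_univ, Fintype.card_fin] at h
    rw [one_pow] at h
    have h' : (1:ℝ) ≤ (K:ℝ) * ∑ k, (Pi i k)^2 := by exact_mod_cast h
    rw [inv_le_iff_one_le_mul₀ (by exact_mod_cast hK : (0:ℝ) < (K:ℝ))]
    linarith [h']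
  have hyy_low : (τ + δM)⁻¹ * (K:ℝ)⁻¹ ≤ y ⬝ᵥ y := by
    rw [hyy_eq, hs2]
    have h1 : (τ + δM)⁻¹ ≤ (d i)⁻¹ := inv_anti₀ (hd i) (hdhigh i)
    have h2 : (0:ℝ) ≤ (d i)⁻¹ := (inv_pos.mpr (hd i)).le
    calc (τ + δM)⁻¹ * (K:ℝ)⁻¹ ≤ (d i)⁻¹ * (K:ℝ)⁻¹ :=
          mul_le_mul_of_nonneg_right h1 (by positivity)
      _ ≤ (d i)⁻¹ * ∑ k, (Pi i k)^2 := mul_le_mul_of_nonneg_left hπ_low h2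
  have hyy_up : y ⬝ᵥ y ≤ (τ + δm)⁻¹ := by
    rw [hyy_eq, hs2]
    have h1 : (d i)⁻¹ ≤ (τ + δm)⁻¹ := inv_anti₀ hδm_pos (hdlow i)
    have h2 : (0:ℝ) ≤ (d i)⁻¹ := (inv_pos.mpr (hd i)).le
    calc (d i)⁻¹ * ∑ k, (Pi i k)^2 ≤ (d i)⁻¹ * 1 :=
          mul_le_mul_of_nonneg_left hπ_up h2
      _ = (d i)⁻¹ := mul_one _
      _ ≤ (τ + δm)⁻¹ := h1
  obtain ⟨hWlow, hWup⟩ := inv_form_bounds G W hGsym hGW a b ha hb hGlow hGup y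
  -- assemble
  have hq_low : (τ + δm) / (τ + δM) * ((K:ℝ) * lM)⁻¹ ≤ y ⬝ᵥ (W *ᵥ y) := by
    have h1 : (τ + δm) / (τ + δM) * ((K:ℝ) * lM)⁻¹ = ((τ + δM)⁻¹ * (K:ℝ)⁻¹) / b := by
      rw [hb_def, div_eq_mul_inv, div_eq_mul_inv, mul_inv, mul_inv, inv_inv]
      ring
    rw [h1]
    calc ((τ + δM)⁻¹ * (K:ℝ)⁻¹) / b ≤ (y ⬝ᵥ y) / b := by
          rw [div_eq_mul_inv, div_eq_mul_inv]
          exact mul_le_mul_of_nonneg_right hyy_low (inv_nonneg.mpr hb.le)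
      _ ≤ y ⬝ᵥ (W *ᵥ y) := hWlow
  have hq_up : y ⬝ᵥ (W *ᵥ y) ≤ (τ + δM) / (τ + δm) * lm⁻¹ := by
    have h1 : (τ + δM) / (τ + δm) * lm⁻¹ = (τ + δm)⁻¹ / a := by
      rw [ha_def, div_eq_mul_inv, div_eq_mul_inv, mul_inv, inv_inv]
      ring
    rw [h1]
    calc y ⬝ᵥ (W *ᵥ y) ≤ (y ⬝ᵥ y) / a := hWup
      _ ≤ (τ + δm)⁻¹ / a := by
          rw [div_eq_mul_inv, div_eq_mul_inv]
          exact mul_le_mul_of_nonneg_right hyy_up (inv_nonneg.mpr ha.le)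
  have hrn : rowNorm V i = Real.sqrt (y ⬝ᵥ (W *ᵥ y)) := by
    rw [rowNorm, hrow]
  constructor
  · rw [hrn]
    have hc : (0:ℝ) ≤ (τ + δm) / (τ + δM) := div_nonneg hδm_pos.le hδM_pos.le
    have hless : Real.sqrt ((τ + δm) / (τ + δM)) * (Real.sqrt ((K:ℝ) * lM))⁻¹ =
        Real.sqrt ((τ + δm) / (τ + δM) * ((K:ℝ) * lM)⁻¹) := by
      rw [Real.sqrt_mul hc (((K:ℝ) * lM)⁻¹), Real.sqrt_inv]
    rw [hless]
    exact Real.sqrt_le_sqrt hq_low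
  · rw [hrn]
    have hc : (0:ℝ) ≤ (τ + δM) / (τ + δm) := div_nonneg hδM_pos.le hδm_pos.le
    have hless : Real.sqrt ((τ + δM) / (τ + δm)) * (Real.sqrt lm)⁻¹ =
        Real.sqrt ((τ + δM) / (τ + δm) * lm⁻¹) := by
      rw [Real.sqrt_mul hc (lm⁻¹), Real.sqrt_inv]
    rw [hless]
    exact Real.sqrt_le_sqrt hq_up
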